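/- Let P = {x ∈ ℝ^n : A x = b and x ≥ 0} be a standard-form polyhedron. If x is an extreme point of P (x ∈ Set.extremePoints ℝ P), then x is a basic feasible solution: x ∈ P and the family of columns {A_j : x_j ≠ 0} of A (viewed as vectors in ℝ^m indexed by the set of coordinates j with x_j ≠ 0) is linearly independent over ℝ. -/

import Mathlib

/-- If `x` is an extreme point of the standard-form polyhedron
`P = {x | A x = b ∧ x ≥ 0}`, then `x` is a basic feasible solution:
`x ∈ P` and the columns of `A` indexed by `{j | x j ≠ 0}` are linearly
independent over `ℝ`. -/
theorem extremePoint_is_basicFeasible (m n : ℕ) (A : Matrix (Fin m) (Fin n) ℝ)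
    (b : Fin m → ℝ) (P : Set (Fin n → ℝ))
    (hP : P = {x : Fin n → ℝ | A.mulVec x = b ∧ ∀ j, 0 ≤ x j})
    (x : Fin n → ℝ) (hx : x ∈ Set.extremePoints ℝ P) :
    x ∈ P ∧
      LinearIndependent ℝ (fun j : {j : Fin n // x j ≠ 0} =>
        (fun i : Fin m => A i (j : Fin n))) := by
  obtain ⟨hxP, hext⟩ := hx
  refine ⟨hxP, ?_⟩
  have hxP' := hxP
  rw [hP] at hxP'
  obtain ⟨hAx, hx0⟩ := hxP'
  by_contra hdep
  rw [Fintype.linearIndependent_iff] at hdep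
  push_neg at hdep
  obtain ⟨c, hc, j0, hj0⟩ := hdep
  classical
  set d : Fin n → ℝ := fun j => if h : x j ≠ 0 then c ⟨j, h⟩ else 0 with hdDef
  have hd_eq : ∀ j : {j : Fin n // x j ≠ 0}, d j = c j := by
    intro j; simp [hdDef, j.2]
  have hd0 : ∀ j : Fin n, x j = 0 → d j = 0 := by
    intro j hj; simp [hdDef, hj]
  have hAd : A.mulVec d = 0 := by
    funext i
    have hi := congrFun hc i
    simp only [Finset.sum_apply, Pi.smul_apply, smul_eq_mul, Pi.zero_apply] at hi
    have key : ∑ j : Fin n, A i j * d j = ∑ j : {j : Fin n // x j ≠ 0}, c j * A i (j : Fin n) := by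
      calc ∑ j : Fin n, A i j * d j
          = ∑ j ∈ Finset.univ.filter (fun j => x j ≠ 0), A i j * d j := by
            refine (Finset.sum_filter_of_ne ?_).symm
            intro j _ hne
            by_contra hj
            exact hne (by rw [hd0 j hj]; ring)
        _ = ∑ j : {j : Fin n // x j ≠ 0}, A i (j : Fin n) * d j :=
            Finset.sum_subtype _ (by simp) _
        _ = ∑ j : {j : Fin n // x j ≠ 0}, c j * A i (j : Fin n) := by
            refine Finset.sum_congr rfl fun j _ => ?_
            rw [hd_eq j]; ring
    show A.mulVec d i = (0 : Fin m → ℝ) i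
    rw [Pi.zero_apply]
    calc A.mulVec d i = ∑ j : Fin n, A i j * d j := rfl
      _ = 0 := key.trans hi
  have hne : Nonempty (Fin n) := ⟨j0.1⟩
  set f : Fin n → ℝ := fun j => if d j = 0 then 1 else x j / |d j| with hfDef
  set ε : ℝ := Finset.univ.inf' Finset.univ_nonempty f with hεDef
  have hxpos : ∀ j, d j ≠ 0 → 0 < x j := by
    intro j hdj
    rcases lt_or_eq_of_le (hx0 j) with h | h
    · exact h
    · exact absurd (hd0 j h.symm) hdj
  have hfpos : ∀ j, 0 < f j := by
    intro j
    by_cases h : d j = 0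
    · simp [hfDef, h]
    · simp only [hfDef, h, if_false]
      exact div_pos (hxpos j h) (abs_pos.mpr h)
  have hεpos : 0 < ε := by
    rw [hεDef, Finset.lt_inf'_iff]
    exact fun j _ => hfpos j
  have hbound : ∀ j, ε * |d j| ≤ x j := by
    intro j
    by_cases h : d j = 0
    · simp [h, hx0 j]
    · have hεle : ε ≤ f j := Finset.inf'_le _ (Finset.mem_univ j)
      have : ε ≤ x j / |d j| := by simpa [hfDef, h] using hεle
      calc ε * |d j| ≤ (x j / |d j|) * |d j| := by
            exact mul_le_mul_of_nonneg_right this (abs_nonneg _)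
        _ = x j := div_mul_cancel₀ _ (ne_of_gt (abs_pos.mpr h))
  have habs : ∀ j, |ε * d j| ≤ x j := by
    intro j
    rw [abs_mul, abs_of_pos hεpos]
    exact hbound j
  set y : Fin n → ℝ := x + ε • d with hyDef
  set z : Fin n → ℝ := x - ε • d with hzDef
  have hyP : y ∈ P := by
    rw [hP]
    constructor
    · rw [hyDef, Matrix.mulVec_add, Matrix.mulVec_smul, hAd, hAx]; simp
    · intro j
      have h1 := habs j
      have h2 := neg_abs_le (ε * d j)
      simp only [hyDef, Pi.add_apply, Pi.smul_apply, smul_eq_mul]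
      linarith
  have hzP : z ∈ P := by
    rw [hP]
    constructor
    · rw [hzDef, Matrix.mulVec_sub, Matrix.mulVec_smul, hAd, hAx]; simp
    · intro j
      have h1 := habs j
      have h2 := le_abs_self (ε * d j)
      simp only [hzDef, Pi.sub_apply, Pi.smul_apply, smul_eq_mul]
      linarith
  have hmem : x ∈ openSegment ℝ y z := by
    refine ⟨1/2, 1/2, by norm_num, by norm_num, by norm_num, ?_⟩
    funext j
    simp only [hyDef, hzDef, Pi.add_apply, Pi.sub_apply, Pi.smul_apply, smul_eq_mul]
    ring
  have hyx := hext hyP hzP hmem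
  have : d j0.1 = 0 := by
    have := congrFun hyx j0.1
    simp only [hyDef, Pi.add_apply, Pi.smul_apply, smul_eq_mul] at this
    nlinarith [hεpos]
  rw [hd_eq j0] at this
  exact hj0 this
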